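/- Let λ and μ be nonempty words over the alphabet {L, M, R}. If there exist words δ and ρ such that μ̄λ = δδ̄ and λμ = ρρ̄, then λ = M^{|λ|} or μ = M^{|μ|} (i.e., at least one of λ, μ consists entirely of the letter M). -/

import Mathlib

/-- The three-letter alphabet {L, M, R}. -/
inductive Letter : Type
  | L | M | R
deriving DecidableEq, Repr

/-- Complementation on letters: R̄ = L, L̄ = R, M̄ = M. -/
def Letter.bar : Letter → Letter
  | .L => .R
  | .M => .M
  | .R => .L

/-- Complement of a word (letterwise). -/
def comp (w : List Letter) : List Letter := w.map Letter.bar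

/-- k-fold concatenation of a word with itself. -/
def npow (w : List Letter) : ℕ → List Letter
  | 0 => []
  | n + 1 => w ++ npow w n

lemma comp_append (a b : List Letter) : comp (a ++ b) = comp a ++ comp b :=
  List.map_append

lemma bar_bar (a : Letter) : a.bar.bar = a := by cases a <;> rfl

lemma comp_comp (w : List Letter) : comp (comp w) = w := by
  induction w with
  | nil => rfl
  | cons a t ih => simp [comp, bar_bar] at ih ⊢; exact ih

lemma comp_length (w : List Letter) : (comp w).length = w.length :=
  List.length_map _

lemma comp_eq_self (w : List Letter) (h : comp w = w) :
    w = List.replicate w.length Letter.M := by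
  induction w with
  | nil => rfl
  | cons a t ih =>
    simp only [comp, List.map_cons, List.cons.injEq] at h
    obtain ⟨ha, ht⟩ := h
    have haM : a = Letter.M := by cases a <;> simp [Letter.bar] at ha ⊢
    simpa [haM, List.replicate_succ] using ih ht

theorem stmt_14 (lam mu : List Letter) (hlam : lam ≠ []) (hmu : mu ≠ [])
    (h1 : ∃ δ : List Letter, comp mu ++ lam = δ ++ comp δ)
    (h2 : ∃ ρ : List Letter, lam ++ mu = ρ ++ comp ρ) :
    lam = List.replicate lam.length Letter.M ∨
      mu = List.replicate mu.length Letter.M := by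
  obtain ⟨δ, h1⟩ := h1
  obtain ⟨ρ, h2⟩ := h2
  set n := ρ.length with hn
  have hlen2 : lam.length + mu.length = n + n := by
    have := congrArg List.length h2
    simpa [comp_length] using this
  have hδ : δ.length = n := by
    have := congrArg List.length h1
    simp [comp_length] at this
    omega
  by_cases hq : mu.length ≤ n
  · -- mu is the complement of the last part of ρ
    set a := ρ.take (n - mu.length) with hadef
    set b := ρ.drop (n - mu.length) with hbdef
    have hab : ρ = a ++ b := (List.take_append_drop _ _).symm
    have hal : a.length = n - mu.length := by
      simp [hadef]; omega
    have hbl : b.length = mu.length := by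
      simp [hbdef]; omega
    have h2' : lam ++ mu = (a ++ (b ++ comp a)) ++ comp b := by
      rw [h2, hab, comp_append]
      simp [List.append_assoc]
    obtain ⟨hl, hm⟩ := List.append_inj' h2' (by simp [comp_length, hbl])
    have h1' : (b ++ a) ++ (b ++ comp a) = δ ++ comp δ := by
      rw [← h1, hm, comp_comp, hl]
      simp [List.append_assoc]
    obtain ⟨hd1, hd2⟩ := List.append_inj h1' (by simp [hδ, hal, hbl]; omega)
    rw [← hd1, comp_append] at hd2
    have hcb : comp b = b :=
      (List.append_inj' hd2 (by simp)).1.symm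
    right
    have hb := comp_eq_self b hcb
    rw [hm, hcb, hb, hbl]
    simp
  · -- lam is an initial part of ρ
    have hp : lam.length ≤ n := by omega
    set a := ρ.take lam.length with hadef
    set b := ρ.drop lam.length with hbdef
    have hab : ρ = a ++ b := (List.take_append_drop _ _).symm
    have hal : a.length = lam.length := by simp [hadef]; omega
    have hbl : b.length = n - lam.length := by simp [hbdef]; omega
    have h2' : lam ++ mu = a ++ ((b ++ comp a) ++ comp b) := by
      rw [h2, hab, comp_append]
      simp [List.append_assoc]
    obtain ⟨hl, hm⟩ := List.append_inj h2' hal.symm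
    have h1' : (comp b ++ a) ++ (b ++ a) = δ ++ comp δ := by
      rw [← h1, hm, comp_append, comp_append, comp_comp, comp_comp, hl]
      simp [List.append_assoc]
    obtain ⟨hd1, hd2⟩ := List.append_inj h1'
      (by simp [hδ, hal, hbl, comp_length]; omega)
    rw [← hd1, comp_append, comp_comp] at hd2
    have hca : a = comp a :=
      (List.append_inj hd2 (by simp)).2
    left
    have ha := comp_eq_self a hca.symm
    rw [hl, ha, hal]
    simp
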